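/- The single-variable herding dynamics on the invariant interval is conjugate to a rotation: under the bijection w ↦ w mod 1 mapping (π−1, π] to (0,1] (with 1 mod 1 := 1), the herding update w^{(t)} = w^{(t-1)} + π − 𝟙[w^{(t-1)} > 0] corresponds to v^{(t)} = (v^{(t-1)} + π) mod 1, and x^{(t)} = 1 if and only if v^{(t-1)} < π (equivalently v^{(t-1)} ∈ (0, π] up to endpoint conventions). -/

import Mathlib

/-- On the invariant interval, single-variable herding is conjugate, via the
map w ↦ w mod 1 := w − ⌈w⌉ + 1 onto (0,1], to the rotation v ↦ (v + π) mod 1, and the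
emitted bit is 1 exactly when the rotated coordinate lies in (0, π]. -/
theorem herding_conjugate_rotation (p : ℝ) (hp0 : 0 < p) (hp1 : p < 1) :
    ∀ w : ℝ, w ∈ Set.Ioc (p - 1) p →
      (w - (⌈w⌉ : ℝ) + 1) ∈ Set.Ioc (0 : ℝ) 1 ∧
      ((w + p - (if 0 < w then 1 else 0)) - (⌈w + p - (if 0 < w then 1 else 0)⌉ : ℝ) + 1)
        = ((w - (⌈w⌉ : ℝ) + 1) + p) - (⌈(w - (⌈w⌉ : ℝ) + 1) + p⌉ : ℝ) + 1 ∧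
      ((0 < w) ↔ (w - (⌈w⌉ : ℝ) + 1) ≤ p) := by
  intro w hw
  obtain ⟨hw1, hw2⟩ := hw
  refine ⟨⟨by linarith [Int.ceil_lt_add_one w], by linarith [Int.le_ceil w]⟩, ?_, ?_⟩
  · have key : ∀ a b : ℤ, (w + p - (a : ℝ)) - (⌈w + p - (a : ℝ)⌉ : ℝ)
        = (w + p - (b : ℝ)) - (⌈w + p - (b : ℝ)⌉ : ℝ) := by
      intro a b
      rw [Int.ceil_sub_intCast, Int.ceil_sub_intCast]
      push_cast; ring
    have h1 : ((w - (⌈w⌉ : ℝ) + 1) + p) = w + p - ((⌈w⌉ - 1 : ℤ) : ℝ) := by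
      push_cast; ring
    rw [h1]
    by_cases h : 0 < w
    · simp only [if_pos h]
      have := key 1 (⌈w⌉ - 1)
      push_cast at this ⊢
      linarith
    · simp only [if_neg h]
      have := key 0 (⌈w⌉ - 1)
      push_cast at this ⊢
      linarith
  · constructor
    · intro h
      have : ⌈w⌉ = 1 := by
        apply Int.ceil_eq_iff.mpr
        constructor <;> push_cast <;> linarith
      rw [this]; push_cast; linarith
    · intro h
      by_contra hn
      push_neg at hn
      have : ⌈w⌉ = 0 := by
        apply Int.ceil_eq_iff.mpr
        constructor <;> push_cast <;> linarith
      rw [this] at h; push_cast at h; linarith
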